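/- Let G be a finite commutative ring and m, t positive integers with t ≥ m. Then EGZ_t^{(m)}(G) ≥ t + D^{(m)}(G) − m, where the inequality holds trivially if EGZ_t^{(m)}(G) = ∞. -/

import Mathlib

open Finset

/-- The `m`-th elementary symmetric expression of the subsequence of `g` selected
by the index set `J`. -/
def eSym {n : ℕ} {R : Type*} [CommRing R] (m : ℕ) (g : Fin n → R) (J : Finset (Fin n)) : R :=
  ∑ T ∈ J.powersetCard m, ∏ i ∈ T, g i

/-- The `m`-th degree Erdős–Ginzburg–Ziv constant of a finite commutative ring, as an
extended natural number (`⊤` if no finite bound exists). -/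
noncomputable def EGZ (R : Type*) [CommRing R] (t m : ℕ) : ℕ∞ :=
  sInf ((Nat.cast : ℕ → ℕ∞) '' {z : ℕ | ∀ n : ℕ, z ≤ n → ∀ g : Fin n → R,
    ∃ J : Finset (Fin n), J.card = t ∧ eSym m g J = 0})

/-- The `m`-th degree Davenport constant of a finite commutative ring. -/
noncomputable def Dav (R : Type*) [CommRing R] (m : ℕ) : ℕ∞ :=
  sInf ((Nat.cast : ℕ → ℕ∞) '' {z : ℕ | ∀ n : ℕ, z ≤ n → ∀ g : Fin n → R,
    ∃ J : Finset (Fin n), m ≤ J.card ∧ eSym m g J = 0})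

theorem stmt_4 (R : Type*) [CommRing R] [Fintype R] (m t : ℕ) (hm : 1 ≤ m) (ht : m ≤ t) :
    (t : ℕ∞) + Dav R m - (m : ℕ∞) ≤ EGZ R t m := by
  refine le_sInf ?_
  rintro _ ⟨z, hz, rfl⟩
  -- First, `t ≤ z`.
  have hzt : t ≤ z := by
    by_contra h
    push_neg at h
    obtain ⟨J, hJ, -⟩ := hz (t - 1) (by omega) (fun _ => (0 : R))
    have hle := J.card_le_univ
    simp only [card_univ, Fintype.card_fin] at hle
    omega
  set k := t - m with hk
  have hDav : Dav R m ≤ ((z - k : ℕ) : ℕ∞) := by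
    refine sInf_le ⟨z - k, ?_, rfl⟩
    intro n hn g
    set N := n + k with hN
    have hzN : z ≤ N := by omega
    set g' : Fin N → R := fun i => if h : (i : ℕ) < n then g ⟨i, h⟩ else 0 with hg'
    obtain ⟨J, hJcard, hJ0⟩ := hz N hzN g'
    set e : Fin n ↪ Fin N := Fin.castAddEmb k with he
    have hecoe : ∀ i : Fin n, ((e i : Fin N) : ℕ) = (i : ℕ) := fun i => rfl
    have hinj : Set.InjOn e (e ⁻¹' ↑J) := e.injective.injOn
    -- mapping back preimages
    have map_pre : ∀ T : Finset (Fin N), (∀ j ∈ T, (j : ℕ) < n) →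
        (T.preimage e (e.injective.injOn)).map e = T := by
      intro T hT
      ext j
      simp only [Finset.mem_map, Finset.mem_preimage]
      constructor
      · rintro ⟨i, hi, rfl⟩; exact hi
      · intro hj
        refine ⟨⟨(j : ℕ), hT j hj⟩, ?_, ?_⟩
        · have : e ⟨(j : ℕ), hT j hj⟩ = j := by
            apply Fin.ext; exact rfl
          rwa [this]
        · apply Fin.ext; exact rfl
    set J₀ : Finset (Fin n) := J.preimage e (e.injective.injOn) with hJ₀
    have hmapJ : J₀.map e = J.filter (fun j : Fin N => (j : ℕ) < n) := by
      ext j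
      simp only [Finset.mem_map, Finset.mem_preimage, Finset.mem_filter, hJ₀]
      constructor
      · rintro ⟨i, hi, rfl⟩; exact ⟨hi, i.isLt⟩
      · rintro ⟨hj, hjn⟩
        refine ⟨⟨(j : ℕ), hjn⟩, ?_, ?_⟩
        · have : e ⟨(j : ℕ), hjn⟩ = j := by apply Fin.ext; exact rfl
          rwa [this]
        · apply Fin.ext; exact rfl
    -- cardinality bound
    have hunivlow : (univ : Finset (Fin N)).filter (fun j : Fin N => (j : ℕ) < n)
        = (univ : Finset (Fin n)).map e := by
      ext j
      simp only [Finset.mem_filter, Finset.mem_univ, true_and, Finset.mem_map]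
      constructor
      · intro hj
        exact ⟨⟨(j : ℕ), hj⟩, Fin.ext rfl⟩
      · rintro ⟨i, -, rfl⟩; exact i.isLt
    have hhigh : (J.filter (fun j : Fin N => ¬ (j : ℕ) < n)).card ≤ k := by
      have hsub : J.filter (fun j : Fin N => ¬ (j : ℕ) < n)
          ⊆ (univ : Finset (Fin N)).filter (fun j : Fin N => ¬ (j : ℕ) < n) :=
        Finset.filter_subset_filter _ (Finset.subset_univ _)
      have h1 := Finset.card_filter_add_card_filter_not
        (s := (univ : Finset (Fin N))) (p := fun j : Fin N => (j : ℕ) < n)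
      rw [hunivlow] at h1
      simp only [Finset.card_map, card_univ, Fintype.card_fin] at h1
      have h2 := Finset.card_le_card hsub
      omega
    have hcardJ₀ : m ≤ J₀.card := by
      have h1 := Finset.card_filter_add_card_filter_not
        (s := J) (p := fun j : Fin N => (j : ℕ) < n)
      have h2 : J₀.card = (J.filter (fun j : Fin N => (j : ℕ) < n)).card := by
        rw [← hmapJ, Finset.card_map]
      omega
    -- the symmetric sum transfers
    have hginv : ∀ i : Fin n, g' (e i) = g i := by
      intro i
      simp only [hg']
      rw [dif_pos (show ((e i : Fin N) : ℕ) < n from i.isLt)]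
      exact congrArg g (Fin.ext rfl)
    have hME : ∀ T : Finset (Fin n), (Finset.mapEmbedding e).toEmbedding T = T.map e :=
      fun _ => rfl
    have hsubps : (J₀.powersetCard m).map (Finset.mapEmbedding e).toEmbedding
        ⊆ J.powersetCard m := by
      intro T hT
      rw [Finset.mem_map] at hT
      obtain ⟨T₀, hT₀, rfl⟩ := hT
      rw [Finset.mem_powersetCard] at hT₀ ⊢
      rw [hME]
      constructor
      · intro j hj
        rw [Finset.mem_map] at hj
        obtain ⟨i, hi, rfl⟩ := hj
        have := hT₀.1 hi
        rw [hJ₀, Finset.mem_preimage] at this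
        exact this
      · rw [Finset.card_map]; exact hT₀.2
    have hzero : ∀ T ∈ J.powersetCard m,
        T ∉ (J₀.powersetCard m).map (Finset.mapEmbedding e).toEmbedding →
        ∏ i ∈ T, g' i = 0 := by
      intro T hT hnT
      by_cases hlow : ∀ j ∈ T, (j : ℕ) < n
      · exfalso
        apply hnT
        rw [Finset.mem_map]
        refine ⟨T.preimage e (e.injective.injOn), ?_, ?_⟩
        · rw [Finset.mem_powersetCard] at hT ⊢
          constructor
          · intro i hi
            rw [Finset.mem_preimage] at hi
            rw [hJ₀, Finset.mem_preimage]
            exact hT.1 hi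
          · have := map_pre T hlow
            have hc : ((T.preimage e (e.injective.injOn)).map e).card = T.card := by
              rw [this]
            rw [Finset.card_map] at hc
            rw [hc]; exact hT.2
        · rw [hME]; exact map_pre T hlow
      · push_neg at hlow
        obtain ⟨j, hjT, hjn⟩ := hlow
        refine Finset.prod_eq_zero hjT ?_
        simp only [hg']
        rw [dif_neg (not_lt.mpr hjn)]
    have key : eSym m g J₀ = eSym m g' J := by
      unfold eSym
      have h1 : ∑ T ∈ J₀.powersetCard m, ∏ i ∈ T, g i
          = ∑ T ∈ (J₀.powersetCard m).map (Finset.mapEmbedding e).toEmbedding,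
              ∏ i ∈ T, g' i := by
        rw [Finset.sum_map]
        refine Finset.sum_congr rfl ?_
        intro T hT
        rw [hME, Finset.prod_map]
        exact Finset.prod_congr rfl fun i _ => (hginv i).symm
      rw [h1]
      exact Finset.sum_subset hsubps hzero
    exact ⟨J₀, hcardJ₀, key.trans hJ0⟩
  calc (t : ℕ∞) + Dav R m - (m : ℕ∞)
      ≤ (t : ℕ∞) + ((z - k : ℕ) : ℕ∞) - (m : ℕ∞) :=
        tsub_le_tsub_right (add_le_add (le_refl _) hDav) _
    _ = ((t + (z - k) - m : ℕ) : ℕ∞) := by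
        rw [ENat.coe_sub (t + (z - k)) m, Nat.cast_add]
    _ = (z : ℕ∞) := by
        congr 1
        omega
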